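/- For every fixed 0 < τ < √2, the function μ ↦ Λ(τ, Φ_c^{−1}(μ)) is concave on the interval 0 < μ < 1/2. -/

import Mathlib

open MeasureTheory ProbabilityTheory Real Set
open scoped ENNReal NNReal

noncomputable section

/-- `Φ_c(η) = Pr_{X ~ N(0,1)}[X ≥ η]`. -/
def gaussTail (η : ℝ) : ℝ := (gaussianReal 0 1 (Set.Ici η)).toReal

/-- The inverse of `Φ_c` on `(0,1)`: since `Φ_c` is continuous and strictly decreasing,
`Φ_c⁻¹(p) = sup {η : Φ_c(η) ≥ p}` for `p ∈ (0,1)`. -/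
def gaussTailInv (p : ℝ) : ℝ := sSup {η : ℝ | p ≤ gaussTail η}

/-- `Λ(τ, η) = Pr[X ≥ η ∧ (1 - τ²/2)X + √(τ² - τ⁴/4)·Y ≥ η] / Φ_c(η)` for independent
standard Gaussians `X, Y`. -/
def lambdaFn (τ η : ℝ) : ℝ :=
  (((gaussianReal 0 1).prod (gaussianReal 0 1))
      {z : ℝ × ℝ | η ≤ z.1 ∧
        η ≤ (1 - τ ^ 2 / 2) * z.1 + Real.sqrt (τ ^ 2 - τ ^ 4 / 4) * z.2}).toReal
    / gaussTail η

abbrev φ₀ : ℝ → ℝ := gaussianPDFReal 0 1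

lemma φ₀_pos (x : ℝ) : 0 < φ₀ x := gaussianPDFReal_pos 0 1 x one_ne_zero

lemma φ₀_cont : Continuous φ₀ := by
  show Continuous fun x => (Real.sqrt (2 * Real.pi * 1))⁻¹ * Real.exp (- (x - 0)^2 / (2 * 1))
  fun_prop

lemma gaussTail_eq_integral (η : ℝ) : gaussTail η = ∫ x in Set.Ici η, φ₀ x := by
  rw [gaussTail, gaussianReal_apply_eq_integral 0 one_ne_zero,
    ENNReal.toReal_ofReal]
  exact setIntegral_nonneg measurableSet_Ici fun x _ => gaussianPDFReal_nonneg 0 1 x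

lemma gaussTail_nonneg (η : ℝ) : 0 ≤ gaussTail η := ENNReal.toReal_nonneg

lemma gaussTail_le_one (η : ℝ) : gaussTail η ≤ 1 := by
  rw [gaussTail]
  have := measure_mono (Set.subset_univ (Set.Ici η)) (μ := gaussianReal 0 1)
  simp only [measure_univ] at this
  exact le_trans (ENNReal.toReal_mono (by simp) this) (by simp)

lemma φ₀_integrableOn (s : Set ℝ) : IntegrableOn φ₀ s := (integrable_gaussianPDFReal 0 1).restrict

lemma gaussTail_sub {a b : ℝ} (hab : a ≤ b) :
    gaussTail a - gaussTail b = ∫ x in Set.Ioc a b, φ₀ x := by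
  have h1 : Set.Ici a = Set.Ico a b ∪ Set.Ici b := by
    ext x; simp only [Set.mem_Ici, Set.mem_union, Set.mem_Ico]
    constructor
    · intro hx; rcases lt_or_ge x b with h | h
      · exact Or.inl ⟨hx, h⟩
      · exact Or.inr h
    · rintro (⟨h, _⟩ | h); exacts [h, hab.trans h]
  have h2 : ∫ x in Set.Ici a, φ₀ x
      = (∫ x in Set.Ico a b, φ₀ x) + ∫ x in Set.Ici b, φ₀ x := by
    rw [h1]
    exact setIntegral_union ((Set.Iio_disjoint_Ici le_rfl).mono_left Set.Ico_subset_Iio_self)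
      measurableSet_Ici
      (φ₀_integrableOn _) (φ₀_integrableOn _)
  rw [gaussTail_eq_integral, gaussTail_eq_integral, h2, integral_Ico_eq_integral_Ioo,
    integral_Ioc_eq_integral_Ioo]
  ring


lemma gaussTail_strictAnti : StrictAnti gaussTail := by
  intro a b hab
  have h : 0 < ∫ x in Set.Ioc a b, φ₀ x := by
    rw [integral_Ioc_eq_integral_Ioo]
    have hpos : 0 < volume (Set.Ioo a b) := by
      rw [Real.volume_Ioo]; simp [hab]
    refine (setIntegral_pos_iff_support_of_nonneg_ae ?_ ?_).2 ?_
    · exact Filter.Eventually.of_forall fun x => (φ₀_pos x).le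
    · exact φ₀_integrableOn _
    · have : (Function.support φ₀) = Set.univ := by
        ext x; simp [Function.mem_support, (φ₀_pos x).ne']
      rw [this]; simpa using hpos
  have := gaussTail_sub hab.le
  linarith

lemma gaussTail_intervalIntegral (a b : ℝ) :
    gaussTail a - gaussTail b = ∫ x in a..b, φ₀ x := by
  rcases le_total a b with h | h
  · rw [intervalIntegral.integral_of_le h, gaussTail_sub h]
  · rw [intervalIntegral.integral_symm, intervalIntegral.integral_of_le h]
    have := gaussTail_sub h
    linarith

lemma gaussTail_hasDerivAt (x : ℝ) : HasDerivAt gaussTail (-(φ₀ x)) x := by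
  have key : ∀ y, gaussTail y = gaussTail 0 - ∫ t in (0:ℝ)..y, φ₀ t := by
    intro y
    have := gaussTail_intervalIntegral 0 y
    linarith
  have hd : HasDerivAt (fun y => ∫ t in (0:ℝ)..y, φ₀ t) (φ₀ x) x := by
    refine intervalIntegral.integral_hasDerivAt_right ((φ₀_integrableOn _).intervalIntegrable) ?_ φ₀_cont.continuousAt
    exact φ₀_cont.stronglyMeasurable.stronglyMeasurableAtFilter
  have : HasDerivAt (fun y => gaussTail 0 - ∫ t in (0:ℝ)..y, φ₀ t) (-(φ₀ x)) x :=
    (hd.const_sub (gaussTail 0)).congr_deriv (by ring)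
  exact this.congr_of_eventuallyEq (Filter.Eventually.of_forall fun y => key y)

lemma gaussTail_continuous : Continuous gaussTail := by
  have : ∀ x : ℝ, ContinuousAt gaussTail x := fun x => (gaussTail_hasDerivAt x).continuousAt
  exact continuous_iff_continuousAt.2 this

lemma gaussTail_zero : gaussTail 0 = 1/2 := by
  have hmap : (gaussianReal 0 1).map (fun x => (-1 : ℝ) * x) = gaussianReal 0 1 := by
    have := gaussianReal_map_const_mul (μ := 0) (v := 1) (-1)
    simpa using this
  have h1 : gaussianReal 0 1 (Set.Ici (0:ℝ)) = gaussianReal 0 1 (Set.Iic (0:ℝ)) := by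
    conv_lhs => rw [← hmap]
    rw [Measure.map_apply (by fun_prop) measurableSet_Ici]
    congr 1
    ext x; simp
  have h2 : gaussianReal 0 1 (Set.Iic (0:ℝ) ∪ Set.Ici (0:ℝ)) = 1 := by
    rw [Set.Iic_union_Ici]; simp
  have h3 : gaussianReal 0 1 (Set.Iic (0:ℝ) ∩ Set.Ici (0:ℝ)) = 0 := by
    have : Set.Iic (0:ℝ) ∩ Set.Ici (0:ℝ) = {0} := by
      ext x; simp [le_antisymm_iff, and_comm]
    rw [this]
    exact gaussianReal_absolutelyContinuous 0 one_ne_zero (volume_singleton)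
  have h4 := measure_union_add_inter (μ := gaussianReal 0 1) (s := Set.Iic (0:ℝ))
    (measurableSet_Ici (a := (0:ℝ)))
  rw [h2, h3, add_zero, ← h1] at h4
  have : gaussTail 0 + gaussTail 0 = 1 := by
    rw [gaussTail]
    rw [← ENNReal.toReal_add (by finiteness) (by finiteness), ← h4]
    simp
  linarith


lemma gaussTail_lt_half {x : ℝ} (hx : 0 < x) : gaussTail x < 1/2 := by
  have := gaussTail_strictAnti hx
  rwa [gaussTail_zero] at this

lemma exists_gaussTail_lt (p : ℝ) (hp : 0 < p) : ∃ M : ℝ, 0 < M ∧ gaussTail M < p := by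
  have htend : Filter.Tendsto (fun n : ℕ => gaussianReal 0 1 (Set.Ici (n:ℝ)))
      Filter.atTop (nhds (gaussianReal 0 1 (⋂ n : ℕ, Set.Ici (n:ℝ)))) := by
    refine MeasureTheory.tendsto_measure_iInter_atTop (fun n => measurableSet_Ici.nullMeasurableSet) ?_ ⟨0, by finiteness⟩
    intro m n hmn
    exact Set.Ici_subset_Ici.2 (by exact_mod_cast hmn)
  have hempty : (⋂ n : ℕ, Set.Ici ((n:ℝ))) = ∅ := by
    ext x
    simp only [Set.mem_iInter, Set.mem_Ici, Set.mem_empty_iff_false, iff_false, not_forall, not_le]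
    obtain ⟨n, hn⟩ := exists_nat_gt x
    exact ⟨n, hn⟩
  rw [hempty, measure_empty] at htend
  have htoReal : Filter.Tendsto (fun n : ℕ => gaussTail (n:ℝ)) Filter.atTop (nhds 0) := by
    have := (ENNReal.tendsto_toReal (by simp)).comp htend
    simpa [gaussTail, Function.comp_def] using this
  have := htoReal.eventually (eventually_lt_nhds hp)
  obtain ⟨n, hn⟩ := this.exists_forall_of_atTop
  exact ⟨(n:ℝ) + 1, by positivity, lt_of_le_of_lt (gaussTail_strictAnti.antitone (by linarith)) (hn n le_rfl)⟩

lemma exists_gaussTail_eq {p : ℝ} (hp : 0 < p) (hp2 : p < 1/2) :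
    ∃ η : ℝ, 0 < η ∧ gaussTail η = p := by
  obtain ⟨M, hM0, hMp⟩ := exists_gaussTail_lt p hp
  have h0 : gaussTail 0 = 1/2 := gaussTail_zero
  have : p ∈ Set.Icc (gaussTail M) (gaussTail 0) := ⟨hMp.le, by rw [h0]; exact hp2.le⟩
  obtain ⟨η, hη, hηp⟩ := intermediate_value_Icc' hM0.le gaussTail_continuous.continuousOn this
  refine ⟨η, ?_, hηp⟩
  rcases lt_or_ge 0 η with h | h
  · exact h
  · exfalso
    have : η = 0 := le_antisymm h hη.1
    rw [this, h0] at hηp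
    linarith

lemma gaussTailInv_eq {η : ℝ} (hη : gaussTail η ∈ Set.Ioo (0:ℝ) 1) :
    gaussTailInv (gaussTail η) = η := by
  have hset : {x : ℝ | gaussTail η ≤ gaussTail x} = Set.Iic η := by
    ext x
    simp only [Set.mem_setOf_eq, Set.mem_Iic]
    constructor
    · intro h
      by_contra hx
      push_neg at hx
      exact absurd h (not_le.2 (gaussTail_strictAnti hx))
    · intro h
      exact gaussTail_strictAnti.antitone h
  rw [gaussTailInv, hset, csSup_Iic]

lemma gaussTail_gaussTailInv {p : ℝ} (hp : 0 < p) (hp2 : p < 1/2) :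
    gaussTail (gaussTailInv p) = p ∧ 0 < gaussTailInv p := by
  obtain ⟨η, hη0, hηp⟩ := exists_gaussTail_eq hp hp2
  have : gaussTailInv p = η := by
    rw [← hηp]
    exact gaussTailInv_eq (by rw [hηp]; exact ⟨hp, by linarith⟩)
  rw [this, hηp]
  exact ⟨rfl, hη0⟩

lemma gaussTailInv_pos {p : ℝ} (hp : 0 < p) (hp2 : p < 1/2) : 0 < gaussTailInv p :=
  (gaussTail_gaussTailInv hp hp2).2

lemma gaussTail_inv_eq {p : ℝ} (hp : 0 < p) (hp2 : p < 1/2) :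
    gaussTail (gaussTailInv p) = p := (gaussTail_gaussTailInv hp hp2).1

lemma gaussTailInv_strictAntiOn : StrictAntiOn gaussTailInv (Set.Ioo 0 (1/2:ℝ)) := by
  intro p hp q hq hpq
  have h1 := gaussTail_inv_eq hp.1 hp.2
  have h2 := gaussTail_inv_eq hq.1 hq.2
  by_contra h
  push_neg at h
  have := gaussTail_strictAnti.antitone h
  rw [h1, h2] at this
  linarith

lemma gaussTailInv_continuousAt {p : ℝ} (hp : p ∈ Set.Ioo (0:ℝ) (1/2)) :
    ContinuousAt gaussTailInv p := by
  have hp1 := hp.1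
  have hp2 := hp.2
  rw [Metric.continuousAt_iff]
  intro ε hε
  set η := gaussTailInv p with hηdef
  have hη0 : 0 < η := gaussTailInv_pos hp.1 hp.2
  have hFη : gaussTail η = p := gaussTail_inv_eq hp.1 hp.2
  set ε' := min (ε/2) (η/2) with hε'def
  have hε'0 : 0 < ε' := lt_min (by linarith) (by linarith)
  have hε'η : η - ε' > 0 := by
    have : ε' ≤ η/2 := min_le_right _ _
    linarith
  have hlo : gaussTail (η + ε') < p := by rw [← hFη]; exact gaussTail_strictAnti (by linarith)
  have hhi : p < gaussTail (η - ε') := by rw [← hFη]; exact gaussTail_strictAnti (by linarith)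
  refine ⟨min (min (gaussTail (η - ε') - p) (p - gaussTail (η + ε'))) (min p (1/2 - p)), ?_, ?_⟩
  · refine lt_min (lt_min (by linarith) (by linarith)) (lt_min hp1 (by linarith))
  · intro q hq
    rw [Real.dist_eq] at hq
    have hq1 : |q - p| < min (gaussTail (η - ε') - p) (p - gaussTail (η + ε')) :=
      lt_of_lt_of_le hq (min_le_left _ _)
    have hq2 : |q - p| < min p (1/2 - p) := lt_of_lt_of_le hq (min_le_right _ _)
    have hq0 : 0 < q := by
      have := abs_lt.1 hq2
      have := min_le_left p (1/2 - p)
      linarith [(abs_lt.1 hq2).1, min_le_left p (1/2-p)]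
    have hqh : q < 1/2 := by
      have h1 := (abs_lt.1 hq2).2
      have h2 := min_le_right p (1/2 - p)
      linarith
    have hFq : gaussTail (gaussTailInv q) = q := gaussTail_inv_eq hq0 hqh
    have hlt1 : gaussTail (η + ε') < q := by
      have := (abs_lt.1 hq1).1
      have := min_le_right (gaussTail (η - ε') - p) (p - gaussTail (η + ε'))
      linarith [(abs_lt.1 hq1).1, min_le_right (gaussTail (η - ε') - p) (p - gaussTail (η + ε'))]
    have hlt2 : q < gaussTail (η - ε') := by
      linarith [(abs_lt.1 hq1).2, min_le_left (gaussTail (η - ε') - p) (p - gaussTail (η + ε'))]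
    have hb1 : gaussTailInv q < η + ε' := by
      by_contra hcon
      push_neg at hcon
      have := gaussTail_strictAnti.antitone hcon
      rw [hFq] at this
      linarith
    have hb2 : η - ε' < gaussTailInv q := by
      by_contra hcon
      push_neg at hcon
      have := gaussTail_strictAnti.antitone hcon
      rw [hFq] at this
      linarith
    rw [Real.dist_eq, abs_lt]
    have : ε' ≤ ε/2 := min_le_left _ _
    constructor <;> [skip; skip] <;> simp only [hηdef] at hb1 hb2 ⊢ <;> linarith


lemma φ₀_def (x : ℝ) : φ₀ x = (Real.sqrt (2*Real.pi))⁻¹ * Real.exp (-x^2/2) := by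
  show gaussianPDFReal 0 1 x = _
  rw [gaussianPDFReal]
  norm_num

lemma gaussTailInv_hasDerivAt {p : ℝ} (hp : p ∈ Set.Ioo (0:ℝ) (1/2)) :
    HasDerivAt gaussTailInv (-(φ₀ (gaussTailInv p)))⁻¹ p := by
  refine HasDerivAt.of_local_left_inverse (gaussTailInv_continuousAt hp)
    (gaussTail_hasDerivAt (gaussTailInv p)) ?_ ?_
  · exact neg_ne_zero.2 (φ₀_pos _).ne'
  · filter_upwards [Ioo_mem_nhds hp.1 hp.2] with q hq
    exact gaussTail_inv_eq hq.1 hq.2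

lemma gFn_hasDerivAt {c p : ℝ} (hp : p ∈ Set.Ioo (0:ℝ) (1/2)) :
    HasDerivAt (fun t => gaussTail (c * gaussTailInv t))
      (c * Real.exp ((1 - c^2) * (gaussTailInv p)^2 / 2)) p := by
  set η := gaussTailInv p
  have h1 : HasDerivAt (fun t => c * gaussTailInv t) (c * (-(φ₀ η))⁻¹) p :=
    (gaussTailInv_hasDerivAt hp).const_mul c
  have h2 : HasDerivAt gaussTail (-(φ₀ (c * η))) (c * η) := gaussTail_hasDerivAt _
  have h3 := h2.comp p h1
  refine h3.congr_deriv ?_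
  symm
  rw [φ₀_def, φ₀_def]
  have hexp : Real.exp (-η^2/2) ≠ 0 := Real.exp_ne_zero _
  have hsqrt : (Real.sqrt (2*Real.pi))⁻¹ ≠ 0 := by
    refine inv_ne_zero (Real.sqrt_ne_zero'.2 (by positivity))
  field_simp
  have hkey : Real.exp ((1 - c^2) * η^2/2) * Real.exp (-η^2/2) = Real.exp (-(c*η)^2/2) := by
    rw [← Real.exp_add]
    ring_nf
  ring_nf at hkey ⊢
  linear_combination c * hkey

lemma gFn_concave {c : ℝ} (hc0 : 0 ≤ c) (hc1 : c ≤ 1) :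
    ConcaveOn ℝ (Set.Ioo (0:ℝ) (1/2)) (fun t => gaussTail (c * gaussTailInv t)) := by
  have hdiff : ∀ p ∈ Set.Ioo (0:ℝ) (1/2),
      HasDerivAt (fun t => gaussTail (c * gaussTailInv t))
        (c * Real.exp ((1 - c^2) * (gaussTailInv p)^2 / 2)) p := fun p hp => gFn_hasDerivAt hp
  have hderiv : ∀ p ∈ Set.Ioo (0:ℝ) (1/2),
      deriv (fun t => gaussTail (c * gaussTailInv t)) p
        = c * Real.exp ((1 - c^2) * (gaussTailInv p)^2 / 2) := fun p hp => (hdiff p hp).deriv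
  refine AntitoneOn.concaveOn_of_deriv (convex_Ioo _ _) ?_ ?_ ?_
  · intro p hp
    exact ((hdiff p hp).continuousAt).continuousWithinAt
  · rw [interior_Ioo]
    intro p hp
    exact ((hdiff p hp).differentiableAt).differentiableWithinAt
  · rw [interior_Ioo]
    intro p hp q hq hpq
    rw [hderiv p hp, hderiv q hq]
    have h1 : 0 < gaussTailInv q := gaussTailInv_pos hq.1 hq.2
    have h2 : gaussTailInv q ≤ gaussTailInv p := by
      rcases eq_or_lt_of_le hpq with h | h
      · rw [h]
      · exact (gaussTailInv_strictAntiOn hp hq h).le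
    have h3 : (gaussTailInv q)^2 ≤ (gaussTailInv p)^2 := by
      apply sq_le_sq' <;> nlinarith
    have h4 : 0 ≤ 1 - c^2 := by nlinarith
    have := Real.exp_le_exp.2 (by nlinarith : (1 - c^2) * (gaussTailInv q)^2 / 2 ≤ (1 - c^2) * (gaussTailInv p)^2 / 2)
    nlinarith [Real.exp_pos ((1 - c^2) * (gaussTailInv q)^2 / 2)]


abbrev pe : ℝ → ℝ≥0∞ := gaussianPDF 0 1

lemma pe_def (x : ℝ) : pe x = ENNReal.ofReal (φ₀ x) := rfl

lemma pe_meas : Measurable pe := measurable_gaussianPDF 0 1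

lemma γ_eq : gaussianReal 0 1 = volume.withDensity pe := gaussianReal_of_var_ne_zero 0 one_ne_zero

lemma Fe_eq (a : ℝ) : gaussianReal 0 1 (Set.Ici a) = ENNReal.ofReal (gaussTail a) :=
  (ENNReal.ofReal_toReal (measure_ne_top _ _)).symm

lemma Fe_meas : Measurable (fun a : ℝ => gaussianReal 0 1 (Set.Ici a)) := by
  simp_rw [Fe_eq]
  exact ENNReal.measurable_ofReal.comp gaussTail_continuous.measurable

lemma Fe_Ioi (a : ℝ) : gaussianReal 0 1 (Set.Ioi a) = gaussianReal 0 1 (Set.Ici a) := by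
  refine le_antisymm (measure_mono Set.Ioi_subset_Ici_self) ?_
  have h1 : Set.Ici a ⊆ {a} ∪ Set.Ioi a := by
    intro x hx
    rcases eq_or_lt_of_le (Set.mem_Ici.1 hx) with h | h
    · exact Or.inl (by simp [h.symm])
    · exact Or.inr h
  calc gaussianReal 0 1 (Set.Ici a) ≤ gaussianReal 0 1 ({a} ∪ Set.Ioi a) := measure_mono h1
    _ ≤ gaussianReal 0 1 {a} + gaussianReal 0 1 (Set.Ioi a) := measure_union_le _ _
    _ = gaussianReal 0 1 (Set.Ioi a) := by
        rw [gaussianReal_absolutelyContinuous 0 one_ne_zero (volume_singleton), zero_add]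

lemma lintegral_affine {s : ℝ} (hs : 0 < s) (a : ℝ) {f : ℝ → ℝ≥0∞} (hf : Measurable f) :
    ∫⁻ z, f ((z - a)/s) ∂volume = ENNReal.ofReal s * ∫⁻ u, f u ∂volume := by
  have hT : ∀ z : ℝ, (z - a)/s = ((fun u => s⁻¹ * u) ∘ (fun z => z + -a)) z := by
    intro z
    simp only [Function.comp_apply]
    rw [div_eq_inv_mul]
    ring_nf
  have hmap : Measure.map ((fun u : ℝ => s⁻¹ * u) ∘ (fun z : ℝ => z + -a)) volume
      = ENNReal.ofReal s • volume := by
    rw [← Measure.map_map (by fun_prop) (by fun_prop)]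
    rw [map_add_right_eq_self volume (-a)]
    rw [Real.map_volume_mul_left (inv_ne_zero hs.ne')]
    congr 1
    rw [inv_inv, abs_of_pos hs]
  calc ∫⁻ z, f ((z - a)/s) ∂volume
      = ∫⁻ z, f (((fun u => s⁻¹ * u) ∘ (fun z => z + -a)) z) ∂volume := by
        congr 1; ext z; rw [hT]
    _ = ∫⁻ u, f u ∂(Measure.map ((fun u : ℝ => s⁻¹ * u) ∘ (fun z : ℝ => z + -a)) volume) := by
        rw [lintegral_map hf (by fun_prop)]
    _ = ENNReal.ofReal s * ∫⁻ u, f u ∂volume := by rw [hmap, lintegral_smul_measure, smul_eq_mul]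


def be (ρ s x z : ℝ) : ℝ≥0∞ := ENNReal.ofReal (s⁻¹ * (φ₀ x * φ₀ ((z - ρ*x)/s)))

lemma be_meas (ρ s : ℝ) : Measurable (fun p : ℝ × ℝ => be ρ s p.1 p.2) := by
  apply ENNReal.measurable_ofReal.comp
  apply Measurable.mul measurable_const
  exact (φ₀_cont.measurable.comp measurable_fst).mul
    (φ₀_cont.measurable.comp ((measurable_snd.sub (measurable_fst.const_mul ρ)).div_const s))

lemma be_symm {ρ s : ℝ} (hs : 0 < s) (hrs : ρ^2 + s^2 = 1) (x z : ℝ) :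
    be ρ s x z = be ρ s z x := by
  unfold be
  congr 1
  have h1 : φ₀ x * φ₀ ((z - ρ*x)/s) = φ₀ z * φ₀ ((x - ρ*z)/s) := by
    rw [φ₀_def, φ₀_def, φ₀_def, φ₀_def]
    have e1 : (Real.sqrt (2*Real.pi))⁻¹ * Real.exp (-x^2/2) *
        ((Real.sqrt (2*Real.pi))⁻¹ * Real.exp (-((z - ρ*x)/s)^2/2))
        = ((Real.sqrt (2*Real.pi))⁻¹)^2 * Real.exp (-x^2/2 + -((z - ρ*x)/s)^2/2) := by
      rw [Real.exp_add]; ring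
    have e2 : (Real.sqrt (2*Real.pi))⁻¹ * Real.exp (-z^2/2) *
        ((Real.sqrt (2*Real.pi))⁻¹ * Real.exp (-((x - ρ*z)/s)^2/2))
        = ((Real.sqrt (2*Real.pi))⁻¹)^2 * Real.exp (-z^2/2 + -((x - ρ*z)/s)^2/2) := by
      rw [Real.exp_add]; ring
    rw [e1, e2]
    congr 2
    have hs2 : s^2 ≠ 0 := by positivity
    field_simp
    ring_nf
    nlinarith [sq_nonneg x, sq_nonneg z]
  rw [h1]


lemma be_split {ρ s : ℝ} (hs : 0 < s) (x z : ℝ) :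
    be ρ s x z = pe x * (ENNReal.ofReal s⁻¹ * pe ((z - ρ*x)/s)) := by
  unfold be
  rw [pe_def, pe_def, ← ENNReal.ofReal_mul (inv_nonneg.2 hs.le),
    ← ENNReal.ofReal_mul (gaussianPDFReal_nonneg 0 1 x)]
  congr 1
  ring

lemma innerIci {ρ s : ℝ} (hs : 0 < s) (η x : ℝ) :
    ∫⁻ z in Set.Ici η, ENNReal.ofReal s⁻¹ * pe ((z - ρ*x)/s) ∂volume
      = gaussianReal 0 1 (Set.Ici ((η - ρ*x)/s)) := by
  have hm : Measurable (fun z : ℝ => pe ((z - ρ*x)/s)) := pe_meas.comp (by fun_prop)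
  rw [lintegral_const_mul _ hm]
  set a := ρ*x with ha
  set f : ℝ → ℝ≥0∞ := fun u => (Set.Ici ((η - a)/s)).indicator pe u with hf
  have hfm : Measurable f := pe_meas.indicator measurableSet_Ici
  have h1 : ∫⁻ z in Set.Ici η, pe ((z - a)/s) ∂volume = ∫⁻ z, f ((z - a)/s) ∂volume := by
    rw [← lintegral_indicator measurableSet_Ici]
    congr 1
    ext z
    rw [hf]
    by_cases hz : η ≤ z
    · have hz' : (η - a)/s ≤ (z - a)/s := (div_le_div_iff_of_pos_right hs).2 (by linarith)
      simp [Set.indicator_apply, hz, hz']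
    · push_neg at hz
      have hz' : ¬ ((η - a)/s ≤ (z - a)/s) := by
        rw [not_le]
        exact (div_lt_div_iff_of_pos_right hs).2 (by linarith)
      simp [Set.indicator_apply, not_le.2 hz, hz']
  rw [h1, lintegral_affine hs a hfm, hf, lintegral_indicator measurableSet_Ici,
    ← gaussianReal_apply 0 one_ne_zero, ← mul_assoc,
    ← ENNReal.ofReal_mul (inv_nonneg.2 hs.le), inv_mul_cancel₀ hs.ne', ENNReal.ofReal_one, one_mul]

lemma innerIoi {ρ s : ℝ} (hs : 0 < s) (w x : ℝ) :
    ∫⁻ z in Set.Ioi w, ENNReal.ofReal s⁻¹ * pe ((z - ρ*x)/s) ∂volume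
      = gaussianReal 0 1 (Set.Ioi ((w - ρ*x)/s)) := by
  have hm : Measurable (fun z : ℝ => pe ((z - ρ*x)/s)) := pe_meas.comp (by fun_prop)
  rw [lintegral_const_mul _ hm]
  set a := ρ*x with ha
  set f : ℝ → ℝ≥0∞ := fun u => (Set.Ioi ((w - a)/s)).indicator pe u with hf
  have hfm : Measurable f := pe_meas.indicator measurableSet_Ioi
  have h1 : ∫⁻ z in Set.Ioi w, pe ((z - a)/s) ∂volume = ∫⁻ z, f ((z - a)/s) ∂volume := by
    rw [← lintegral_indicator measurableSet_Ioi]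
    congr 1
    ext z
    rw [hf]
    by_cases hz : w < z
    · have hz' : (w - a)/s < (z - a)/s := (div_lt_div_iff_of_pos_right hs).2 (by linarith)
      simp [Set.indicator_apply, hz, hz']
    · push_neg at hz
      have hz' : ¬ ((w - a)/s < (z - a)/s) := by
        rw [not_lt]
        exact (div_le_div_iff_of_pos_right hs).2 (by linarith)
      simp [Set.indicator_apply, not_lt.2 hz, hz']
  rw [h1, lintegral_affine hs a hfm, hf, lintegral_indicator measurableSet_Ioi,
    ← gaussianReal_apply 0 one_ne_zero, ← mul_assoc,
    ← ENNReal.ofReal_mul (inv_nonneg.2 hs.le), inv_mul_cancel₀ hs.ne', ENNReal.ofReal_one, one_mul]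

lemma be_inner_Ioi {ρ s : ℝ} (hs : 0 < s) (x : ℝ) :
    ∫⁻ z in Set.Ioi x, be ρ s x z ∂volume
      = pe x * gaussianReal 0 1 (Set.Ici ((1-ρ)/s * x)) := by
  have h1 : ∀ z, be ρ s x z = pe x * (ENNReal.ofReal s⁻¹ * pe ((z - ρ*x)/s)) :=
    fun z => be_split hs x z
  calc ∫⁻ z in Set.Ioi x, be ρ s x z ∂volume
      = ∫⁻ z in Set.Ioi x, pe x * (ENNReal.ofReal s⁻¹ * pe ((z - ρ*x)/s)) ∂volume := by
        congr 1; ext z; rw [h1]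
    _ = pe x * ∫⁻ z in Set.Ioi x, ENNReal.ofReal s⁻¹ * pe ((z - ρ*x)/s) ∂volume := by
        rw [lintegral_const_mul]
        exact (measurable_const.mul (pe_meas.comp (by fun_prop)))
    _ = pe x * gaussianReal 0 1 (Set.Ioi ((x - ρ*x)/s)) := by rw [innerIoi hs]
    _ = pe x * gaussianReal 0 1 (Set.Ici ((1-ρ)/s * x)) := by
        rw [Fe_Ioi]
        congr 2
        field_simp


section Quadrant

variable {ρ s η : ℝ}

lemma quadrant_eq (hs : 0 < s) (hrs : ρ^2 + s^2 = 1) (η : ℝ) :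
    ((gaussianReal 0 1).prod (gaussianReal 0 1))
        {z : ℝ × ℝ | η ≤ z.1 ∧ η ≤ ρ * z.1 + s * z.2}
      = 2 * ∫⁻ x in Set.Ici η, pe x * gaussianReal 0 1 (Set.Ici ((1-ρ)/s * x)) ∂volume := by
  set ω : Measure (ℝ × ℝ) := (volume.prod volume).withDensity (fun p => be ρ s p.1 p.2) with hω
  have hbe : Measurable (fun p : ℝ × ℝ => be ρ s p.1 p.2) := be_meas ρ s
  set Q : Set (ℝ × ℝ) := {p | η ≤ p.1 ∧ η ≤ p.2} with hQdef
  set D1 : Set (ℝ × ℝ) := {p | (η ≤ p.1 ∧ η ≤ p.2) ∧ p.2 < p.1} with hD1def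
  set D2 : Set (ℝ × ℝ) := {p | (η ≤ p.1 ∧ η ≤ p.2) ∧ p.1 < p.2} with hD2def
  set D3 : Set (ℝ × ℝ) := {p | (η ≤ p.1 ∧ η ≤ p.2) ∧ p.1 = p.2} with hD3def
  have hQ : MeasurableSet Q :=
    (measurableSet_le measurable_const measurable_fst).inter
      (measurableSet_le measurable_const measurable_snd)
  have hD1 : MeasurableSet D1 := hQ.inter (measurableSet_lt measurable_snd measurable_fst)
  have hD2 : MeasurableSet D2 := hQ.inter (measurableSet_lt measurable_fst measurable_snd)
  have hD3 : MeasurableSet D3 := hQ.inter (measurableSet_eq_fun measurable_fst measurable_snd)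
  -- step 1 : K = ω Q
  have step1 : ((gaussianReal 0 1).prod (gaussianReal 0 1))
      {z : ℝ × ℝ | η ≤ z.1 ∧ η ≤ ρ * z.1 + s * z.2} = ω Q := by
    have hS : MeasurableSet {z : ℝ × ℝ | η ≤ z.1 ∧ η ≤ ρ * z.1 + s * z.2} :=
      (measurableSet_le measurable_const measurable_fst).inter
        (measurableSet_le measurable_const ((measurable_fst.const_mul ρ).add
          (measurable_snd.const_mul s)))
    rw [Measure.prod_apply hS]
    have hsec : ∀ x : ℝ, gaussianReal 0 1 (Prod.mk x ⁻¹' {z : ℝ × ℝ | η ≤ z.1 ∧ η ≤ ρ * z.1 + s * z.2})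
        = (Set.Ici η).indicator (fun x => gaussianReal 0 1 (Set.Ici ((η - ρ*x)/s))) x := by
      intro x
      by_cases hx : η ≤ x
      · have hsect : Prod.mk x ⁻¹' {z : ℝ × ℝ | η ≤ z.1 ∧ η ≤ ρ * z.1 + s * z.2}
            = Set.Ici ((η - ρ*x)/s) := by
          ext y
          simp only [Set.mem_preimage, Set.mem_setOf_eq, Set.mem_Ici, hx, true_and]
          rw [div_le_iff₀ hs]
          constructor <;> intro h <;> nlinarith
        rw [hsect, Set.indicator_of_mem (Set.mem_Ici.mpr hx)]
      · have hsect : Prod.mk x ⁻¹' {z : ℝ × ℝ | η ≤ z.1 ∧ η ≤ ρ * z.1 + s * z.2} = ∅ := by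
          ext y
          simp only [Set.mem_preimage, Set.mem_setOf_eq, Set.mem_empty_iff_false, iff_false]
          exact fun h => hx h.1
        rw [hsect, measure_empty, Set.indicator_of_notMem (fun h => hx (Set.mem_Ici.mp h))]
    calc ∫⁻ x, gaussianReal 0 1 (Prod.mk x ⁻¹' {z : ℝ × ℝ | η ≤ z.1 ∧ η ≤ ρ * z.1 + s * z.2})
          ∂(gaussianReal 0 1)
        = ∫⁻ x, (Set.Ici η).indicator (fun x => gaussianReal 0 1 (Set.Ici ((η - ρ*x)/s))) x
          ∂(gaussianReal 0 1) := by
          congr 1; ext x; exact hsec x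
      _ = ∫⁻ x in Set.Ici η, gaussianReal 0 1 (Set.Ici ((η - ρ*x)/s)) ∂(gaussianReal 0 1) := by
          rw [lintegral_indicator measurableSet_Ici]
      _ = ∫⁻ x in Set.Ici η, pe x * gaussianReal 0 1 (Set.Ici ((η - ρ*x)/s)) ∂volume := by
          have hg : Measurable fun x : ℝ => (volume.withDensity pe) (Set.Ici ((η - ρ*x)/s)) := by
            have h := Fe_meas
            rw [γ_eq] at h
            exact h.comp (by fun_prop : Measurable fun x : ℝ => (η - ρ*x)/s)
          rw [γ_eq, restrict_withDensity measurableSet_Ici,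
            lintegral_withDensity_eq_lintegral_mul _ pe_meas hg]
          simp only [Pi.mul_apply]
      _ = ∫⁻ x in Set.Ici η, ∫⁻ z in Set.Ici η, be ρ s x z ∂volume ∂volume := by
          refine setLIntegral_congr_fun measurableSet_Ici ?_
          intro x _
          beta_reduce
          have hm : Measurable fun z : ℝ => ENNReal.ofReal s⁻¹ * pe ((z - ρ*x)/s) := by
            exact measurable_const.mul (pe_meas.comp (by fun_prop))
          rw [← innerIci hs η x, ← lintegral_const_mul _ hm]
          congr 1
          ext z
          exact (be_split hs x z).symm
      _ = ω Q := by
          have h2 : ω Q = ∫⁻ x, ∫⁻ z, Q.indicator (fun p : ℝ × ℝ => be ρ s p.1 p.2) (x, z)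
              ∂volume ∂volume := by
            rw [hω, withDensity_apply _ hQ, ← lintegral_indicator hQ,
              lintegral_prod _ (hbe.indicator hQ).aemeasurable]
          rw [h2]
          rw [← lintegral_indicator (measurableSet_Ici (a := η))]
          congr 1
          ext x
          by_cases hx : η ≤ x
          · rw [Set.indicator_of_mem (Set.mem_Ici.mpr hx)]
            rw [← lintegral_indicator (measurableSet_Ici (a := η))]
            congr 1
            ext z
            by_cases hz : η ≤ z
            · rw [Set.indicator_of_mem (Set.mem_Ici.mpr hz),
                Set.indicator_of_mem (show (x,z) ∈ Q from ⟨hx, hz⟩)]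
            · rw [Set.indicator_of_notMem (fun h => hz (Set.mem_Ici.mp h)),
                Set.indicator_of_notMem (show (x,z) ∉ Q from fun h => hz h.2)]
          · rw [Set.indicator_of_notMem (fun h => hx (Set.mem_Ici.mp h))]
            have : ∀ z : ℝ, Q.indicator (fun p : ℝ × ℝ => be ρ s p.1 p.2) (x, z) = 0 :=
              fun z => Set.indicator_of_notMem (fun h => hx h.1) _
            simp only [this, lintegral_zero]
  -- step 2 : ω Q = ω D1 + ω D2
  have step2 : ω Q = ω D1 + ω D2 := by
    have hdiag : ω {p : ℝ × ℝ | p.1 = p.2} = 0 := by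
      have hdm : MeasurableSet {p : ℝ × ℝ | p.1 = p.2} :=
        measurableSet_eq_fun measurable_fst measurable_snd
      have hbase : (volume.prod volume) {p : ℝ × ℝ | p.1 = p.2} = 0 := by
        rw [Measure.prod_apply hdm]
        have : ∀ x : ℝ, volume (Prod.mk x ⁻¹' {p : ℝ × ℝ | p.1 = p.2}) = 0 := by
          intro x
          have : Prod.mk x ⁻¹' {p : ℝ × ℝ | p.1 = p.2} = {x} := by
            ext y; simp [eq_comm]
          rw [this, volume_singleton]
        simp [this]
      exact (withDensity_absolutelyContinuous _ _) hbase
    have hD3z : ω D3 = 0 := by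
      refine measure_mono_null ?_ hdiag
      intro p hp
      exact hp.2
    have hsplit : Q = (D1 ∪ D2) ∪ D3 := by
      ext p
      simp only [hQdef, hD1def, hD2def, hD3def, Set.mem_union, Set.mem_setOf_eq]
      constructor
      · intro h
        rcases lt_trichotomy p.2 p.1 with hlt | heq | hgt
        · exact Or.inl (Or.inl ⟨h, hlt⟩)
        · exact Or.inr ⟨h, heq.symm⟩
        · exact Or.inl (Or.inr ⟨h, hgt⟩)
      · rintro ((⟨h, _⟩ | ⟨h, _⟩) | ⟨h, _⟩) <;> exact h
    have hd12 : Disjoint D1 D2 := by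
      rw [Set.disjoint_left]
      rintro p ⟨_, h1⟩ ⟨_, h2⟩
      exact absurd h2 (not_lt.2 h1.le)
    have hd3 : Disjoint (D1 ∪ D2) D3 := by
      rw [Set.disjoint_left]
      rintro p (⟨_, h1⟩ | ⟨_, h1⟩) ⟨_, h2⟩
      · exact absurd h2 (ne_of_gt h1)
      · exact absurd h2 (ne_of_lt h1)
    rw [hsplit, measure_union hd3 hD3, hD3z, add_zero, measure_union hd12 hD2]
  -- step 3 : ω D1 = ω D2
  have step3 : ω D1 = ω D2 := by
    have h1 : ω D1 = ∫⁻ p, D1.indicator (fun p : ℝ × ℝ => be ρ s p.1 p.2) p ∂(volume.prod volume) := by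
      rw [hω, withDensity_apply _ hD1, lintegral_indicator hD1]
    have h2 : ω D2 = ∫⁻ p, D2.indicator (fun p : ℝ × ℝ => be ρ s p.1 p.2) p ∂(volume.prod volume) := by
      rw [hω, withDensity_apply _ hD2, lintegral_indicator hD2]
    rw [h1, h2]
    have hswap : ∀ p : ℝ × ℝ, D1.indicator (fun p : ℝ × ℝ => be ρ s p.1 p.2) p
        = D2.indicator (fun p : ℝ × ℝ => be ρ s p.1 p.2) (Prod.swap p) := by
      intro p
      have hmem : Prod.swap p ∈ D2 ↔ p ∈ D1 := by
        simp only [hD1def, hD2def, Set.mem_setOf_eq, Prod.fst_swap, Prod.snd_swap]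
        tauto
      by_cases hp : p ∈ D1
      · rw [Set.indicator_of_mem hp, Set.indicator_of_mem (hmem.2 hp)]
        simp only [Prod.fst_swap, Prod.snd_swap]
        exact (be_symm hs hrs p.2 p.1).symm
      · rw [Set.indicator_of_notMem hp, Set.indicator_of_notMem (fun h => hp (hmem.1 h))]
    calc ∫⁻ p, D1.indicator (fun p : ℝ × ℝ => be ρ s p.1 p.2) p ∂(volume.prod volume)
        = ∫⁻ p, D2.indicator (fun p : ℝ × ℝ => be ρ s p.1 p.2) (Prod.swap p) ∂(volume.prod volume) := by
          congr 1; ext p; exact hswap p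
      _ = ∫⁻ p, D2.indicator (fun p : ℝ × ℝ => be ρ s p.1 p.2) p ∂(Measure.map Prod.swap (volume.prod volume)) := by
          rw [lintegral_map (hbe.indicator hD2) measurable_swap]
      _ = ∫⁻ p, D2.indicator (fun p : ℝ × ℝ => be ρ s p.1 p.2) p ∂(volume.prod volume) := by
          rw [Measure.prod_swap]
  -- step 4 : ω D2 = He
  have step4 : ω D2 = ∫⁻ x in Set.Ici η, pe x * gaussianReal 0 1 (Set.Ici ((1-ρ)/s * x)) ∂volume := by
    have h2 : ω D2 = ∫⁻ x, ∫⁻ z, D2.indicator (fun p : ℝ × ℝ => be ρ s p.1 p.2) (x, z) ∂volume ∂volume := by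
      rw [hω, withDensity_apply _ hD2, ← lintegral_indicator hD2,
        lintegral_prod _ (hbe.indicator hD2).aemeasurable]
    rw [h2]
    have hinner : ∀ x : ℝ, ∫⁻ z, D2.indicator (fun p : ℝ × ℝ => be ρ s p.1 p.2) (x, z) ∂volume
        = (Set.Ici η).indicator (fun x => pe x * gaussianReal 0 1 (Set.Ici ((1-ρ)/s * x))) x := by
      intro x
      by_cases hx : η ≤ x
      · have hptwise : ∀ z : ℝ, D2.indicator (fun p : ℝ × ℝ => be ρ s p.1 p.2) (x, z)
            = (Set.Ioi x).indicator (fun z => be ρ s x z) z := by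
          intro z
          by_cases hz : x < z
          · have hmem : (x, z) ∈ D2 := ⟨⟨hx, hx.trans hz.le⟩, hz⟩
            rw [Set.indicator_of_mem hmem, Set.indicator_of_mem (Set.mem_Ioi.mpr hz)]
          · have hmem : (x, z) ∉ D2 := fun h => hz h.2
            rw [Set.indicator_of_notMem hmem, Set.indicator_of_notMem (fun h => hz (Set.mem_Ioi.mp h))]
        calc ∫⁻ z, D2.indicator (fun p : ℝ × ℝ => be ρ s p.1 p.2) (x, z) ∂volume
            = ∫⁻ z, (Set.Ioi x).indicator (fun z => be ρ s x z) z ∂volume := by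
              congr 1; ext z; exact hptwise z
          _ = ∫⁻ z in Set.Ioi x, be ρ s x z ∂volume := by
              rw [lintegral_indicator measurableSet_Ioi]
          _ = pe x * gaussianReal 0 1 (Set.Ici ((1-ρ)/s * x)) := be_inner_Ioi hs x
          _ = (Set.Ici η).indicator (fun x => pe x * gaussianReal 0 1 (Set.Ici ((1-ρ)/s * x))) x := by
              rw [Set.indicator_of_mem (Set.mem_Ici.mpr hx)]
      · have hptwise : ∀ z : ℝ, D2.indicator (fun p : ℝ × ℝ => be ρ s p.1 p.2) (x, z) = 0 := by
          intro z
          exact Set.indicator_of_notMem (fun h => hx h.1.1) _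
        simp only [hptwise, lintegral_zero]
        rw [Set.indicator_of_notMem (fun h => hx (Set.mem_Ici.mp h))]
    calc ∫⁻ x, ∫⁻ z, D2.indicator (fun p : ℝ × ℝ => be ρ s p.1 p.2) (x, z) ∂volume ∂volume
        = ∫⁻ x, (Set.Ici η).indicator (fun x => pe x * gaussianReal 0 1 (Set.Ici ((1-ρ)/s * x))) x ∂volume := by
          congr 1; ext x; exact hinner x
      _ = ∫⁻ x in Set.Ici η, pe x * gaussianReal 0 1 (Set.Ici ((1-ρ)/s * x)) ∂volume := by
          rw [lintegral_indicator measurableSet_Ici]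
  rw [step1, step2, step3, step4, two_mul]

end Quadrant


lemma gaussTail_pos (η : ℝ) : 0 < gaussTail η := by
  rw [gaussTail_eq_integral]
  refine (setIntegral_pos_iff_support_of_nonneg_ae ?_ ?_).2 ?_
  · exact Filter.Eventually.of_forall fun x => (φ₀_pos x).le
  · exact φ₀_integrableOn _
  · have : (Function.support φ₀) = Set.univ := by
      ext x; simp [Function.mem_support, (φ₀_pos x).ne']
    rw [this]
    simp [Real.volume_Ici]

lemma gaussTail_lt_one (η : ℝ) : gaussTail η < 1 :=
  lt_of_lt_of_le (gaussTail_strictAnti (show η - 1 < η by linarith)) (gaussTail_le_one _)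

lemma quadrant_toReal {ρ s : ℝ} (hs : 0 < s) (hrs : ρ^2 + s^2 = 1) (η : ℝ) :
    (((gaussianReal 0 1).prod (gaussianReal 0 1))
        {z : ℝ × ℝ | η ≤ z.1 ∧ η ≤ ρ * z.1 + s * z.2}).toReal
      = 2 * ∫ x in Set.Ici η, φ₀ x * gaussTail ((1-ρ)/s * x) := by
  rw [quadrant_eq hs hrs η]
  have hcont : Continuous fun x : ℝ => φ₀ x * gaussTail ((1-ρ)/s * x) :=
    φ₀_cont.mul (gaussTail_continuous.comp (continuous_const.mul continuous_id))
  have hptwise : ∀ x : ℝ, pe x * gaussianReal 0 1 (Set.Ici ((1-ρ)/s * x))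
      = ENNReal.ofReal (φ₀ x * gaussTail ((1-ρ)/s * x)) := by
    intro x
    rw [pe_def, Fe_eq, ← ENNReal.ofReal_mul (gaussianPDFReal_nonneg 0 1 x)]
  have hle : (∫⁻ x in Set.Ici η, pe x * gaussianReal 0 1 (Set.Ici ((1-ρ)/s * x)) ∂volume) ≤ 1 := by
    calc (∫⁻ x in Set.Ici η, pe x * gaussianReal 0 1 (Set.Ici ((1-ρ)/s * x)) ∂volume)
        ≤ ∫⁻ x in Set.Ici η, pe x ∂volume := by
          refine lintegral_mono fun x => ?_
          calc pe x * gaussianReal 0 1 (Set.Ici ((1-ρ)/s * x)) ≤ pe x * 1 := by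
                exact mul_le_mul_right prob_le_one _
            _ = pe x := mul_one _
      _ ≤ ∫⁻ x, pe x ∂volume := setLIntegral_le_lintegral _ _
      _ = 1 := lintegral_gaussianPDF_eq_one 0 one_ne_zero
  have hint : ∫ x in Set.Ici η, φ₀ x * gaussTail ((1-ρ)/s * x)
      = (∫⁻ x in Set.Ici η, pe x * gaussianReal 0 1 (Set.Ici ((1-ρ)/s * x)) ∂volume).toReal := by
    rw [integral_eq_lintegral_of_nonneg_ae
      (Filter.Eventually.of_forall fun x =>
        mul_nonneg (gaussianPDFReal_nonneg 0 1 x) (gaussTail_nonneg _))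
      hcont.aestronglyMeasurable.restrict]
    congr 1
    refine lintegral_congr fun x => ?_
    rw [hptwise x]
  rw [hint, ENNReal.toReal_mul]
  norm_num


lemma gaussTailInv_gaussTail (x : ℝ) : gaussTailInv (gaussTail x) = x :=
  gaussTailInv_eq ⟨gaussTail_pos x, gaussTail_lt_one x⟩

def Wc (c η : ℝ) : ℝ := ∫ x in Set.Ici η, φ₀ x * gaussTail (c * x)

lemma Wc_cont (c : ℝ) : Continuous fun x : ℝ => φ₀ x * gaussTail (c * x) :=
  φ₀_cont.mul (gaussTail_continuous.comp (continuous_const.mul continuous_id))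

lemma Wc_integrableOn (c : ℝ) (s : Set ℝ) :
    IntegrableOn (fun x => φ₀ x * gaussTail (c * x)) s := by
  refine Integrable.mono (φ₀_integrableOn s) ((Wc_cont c).aestronglyMeasurable.restrict) ?_
  refine Filter.Eventually.of_forall fun x => ?_
  rw [Real.norm_eq_abs, Real.norm_eq_abs,
    abs_of_nonneg (mul_nonneg (gaussianPDFReal_nonneg 0 1 x) (gaussTail_nonneg _)),
    abs_of_nonneg (gaussianPDFReal_nonneg 0 1 x)]
  calc φ₀ x * gaussTail (c * x) ≤ φ₀ x * 1 :=
        mul_le_mul_of_nonneg_left (gaussTail_le_one _) (gaussianPDFReal_nonneg 0 1 x)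
    _ = φ₀ x := mul_one _

lemma Wc_nonneg (c η : ℝ) : 0 ≤ Wc c η :=
  setIntegral_nonneg measurableSet_Ici fun x _ =>
    mul_nonneg (gaussianPDFReal_nonneg 0 1 x) (gaussTail_nonneg _)

lemma Wc_le (c η : ℝ) : Wc c η ≤ gaussTail η := by
  rw [gaussTail_eq_integral]
  refine setIntegral_mono_on (Wc_integrableOn c _) (φ₀_integrableOn _) measurableSet_Ici ?_
  intro x _
  calc φ₀ x * gaussTail (c * x) ≤ φ₀ x * 1 :=
        mul_le_mul_of_nonneg_left (gaussTail_le_one _) (gaussianPDFReal_nonneg 0 1 x)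
    _ = φ₀ x := mul_one _

lemma Wc_sub (c : ℝ) {a b : ℝ} (hab : a ≤ b) :
    Wc c a - Wc c b = ∫ x in Set.Ioc a b, φ₀ x * gaussTail (c * x) := by
  have h1 : Set.Ici a = Set.Ico a b ∪ Set.Ici b := by
    ext x; simp only [Set.mem_Ici, Set.mem_union, Set.mem_Ico]
    constructor
    · intro hx; rcases lt_or_ge x b with h | h
      · exact Or.inl ⟨hx, h⟩
      · exact Or.inr h
    · rintro (⟨h, _⟩ | h); exacts [h, hab.trans h]
  have h2 : Wc c a = (∫ x in Set.Ico a b, φ₀ x * gaussTail (c * x)) + Wc c b := by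
    rw [Wc, h1]
    exact setIntegral_union ((Set.Iio_disjoint_Ici le_rfl).mono_left Set.Ico_subset_Iio_self)
      measurableSet_Ici (Wc_integrableOn c _) (Wc_integrableOn c _)
  rw [h2, integral_Ico_eq_integral_Ioo, integral_Ioc_eq_integral_Ioo]
  ring

lemma Wc_subst {c a b : ℝ} (ha : a ∈ Set.Ioo (0:ℝ) (1/2)) (hb : b ∈ Set.Ioo (0:ℝ) (1/2))
    (hab : a ≤ b) :
    Wc c (gaussTailInv b) - Wc c (gaussTailInv a)
      = ∫ t in a..b, gaussTail (c * gaussTailInv t) := by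
  set ηa := gaussTailInv a with hηa
  set ηb := gaussTailInv b with hηb
  have hba : ηb ≤ ηa := by
    rcases eq_or_lt_of_le hab with h | h
    · rw [hηa, hηb, h]
    · exact (gaussTailInv_strictAntiOn ha hb h).le
  have hFa : gaussTail ηa = a := gaussTail_inv_eq ha.1 ha.2
  have hFb : gaussTail ηb = b := gaussTail_inv_eq hb.1 hb.2
  have himg : gaussTail '' (Set.uIcc ηb ηa) ⊆ Set.Icc a b := by
    rw [Set.uIcc_of_le hba]
    rintro t ⟨x, hx, rfl⟩
    constructor
    · rw [← hFa]; exact gaussTail_strictAnti.antitone hx.2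
    · rw [← hFb]; exact gaussTail_strictAnti.antitone hx.1
  have hIccsub : Set.Icc a b ⊆ Set.Ioo (0:ℝ) (1/2) := fun t ht =>
    ⟨lt_of_lt_of_le ha.1 ht.1, lt_of_le_of_lt ht.2 hb.2⟩
  have hgcont : ContinuousOn (fun t => gaussTail (c * gaussTailInv t))
      (gaussTail '' (Set.uIcc ηb ηa)) := by
    refine ContinuousOn.mono ?_ himg
    intro t ht
    have ht' := hIccsub ht
    exact (gaussTail_continuous.continuousAt.comp
      ((continuousAt_const.mul (gaussTailInv_continuousAt ht')))).continuousWithinAt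
  have hsub := intervalIntegral.integral_comp_smul_deriv'
    (f := gaussTail) (f' := fun x => -(φ₀ x)) (g := fun t => gaussTail (c * gaussTailInv t))
    (a := ηb) (b := ηa)
    (fun x _ => gaussTail_hasDerivAt x) (φ₀_cont.neg.continuousOn) hgcont
  simp only [Function.comp_apply] at hsub
  rw [hFa, hFb] at hsub
  have hcongr : ∫ x in ηb..ηa, (-(φ₀ x)) • gaussTail (c * gaussTailInv (gaussTail x))
      = ∫ x in ηb..ηa, -(φ₀ x * gaussTail (c * x)) := by
    congr 1
    ext x
    rw [gaussTailInv_gaussTail x, smul_eq_mul]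
    ring
  rw [hcongr] at hsub
  rw [intervalIntegral.integral_neg] at hsub
  have hWc : Wc c ηb - Wc c ηa = ∫ x in ηb..ηa, φ₀ x * gaussTail (c * x) := by
    rw [intervalIntegral.integral_of_le hba, Wc_sub c hba]
  rw [hWc]
  rw [intervalIntegral.integral_symm a b] at hsub
  linarith


def gT (c t : ℝ) : ℝ := gaussTail (c * gaussTailInv t)

lemma gT_nonneg (c t : ℝ) : 0 ≤ gT c t := gaussTail_nonneg _

lemma gT_le_one (c t : ℝ) : gT c t ≤ 1 := gaussTail_le_one _

lemma gT_continuousAt {c t : ℝ} (ht : t ∈ Set.Ioo (0:ℝ) (1/2)) : ContinuousAt (gT c) t :=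
  gaussTail_continuous.continuousAt.comp
    (continuousAt_const.mul (gaussTailInv_continuousAt ht))

lemma restrict_Ioc_eq_Ioo (a b : ℝ) :
    volume.restrict (Set.Ioc a b) = volume.restrict (Set.Ioo a b) :=
  (Measure.restrict_congr_set Ioo_ae_eq_Ioc).symm

lemma gT_aesm {c μ : ℝ} (hμ0 : 0 < μ) (hμ : μ ≤ 1/2) :
    AEStronglyMeasurable (gT c) (volume.restrict (Set.Ioc 0 μ)) := by
  rw [restrict_Ioc_eq_Ioo]
  refine ContinuousOn.aestronglyMeasurable ?_ measurableSet_Ioo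
  intro t ht
  exact (gT_continuousAt ⟨ht.1, lt_of_lt_of_le ht.2 hμ⟩).continuousWithinAt

lemma gT_integrableOn {c μ : ℝ} (hμ0 : 0 < μ) (hμ : μ ≤ 1/2) :
    IntegrableOn (gT c) (Set.Ioc 0 μ) := by
  refine ⟨gT_aesm hμ0 hμ, ?_⟩
  refine MeasureTheory.HasFiniteIntegral.of_bounded (C := 1) ?_
  refine Filter.Eventually.of_forall fun t => ?_
  rw [Real.norm_eq_abs, abs_of_nonneg (gT_nonneg c t)]
  exact gT_le_one c t

lemma W_eq_T {c μ : ℝ} (hμ : μ ∈ Set.Ioo (0:ℝ) (1/2)) :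
    Wc c (gaussTailInv μ) = ∫ t in Set.Ioc 0 μ, gT c t := by
  set d := Wc c (gaussTailInv μ) - ∫ t in Set.Ioc 0 μ, gT c t with hd
  have key : ∀ ε : ℝ, ε ∈ Set.Ioo (0:ℝ) μ → |d| ≤ 2 * ε := by
    intro ε hε
    have hεI : ε ∈ Set.Ioo (0:ℝ) (1/2) := ⟨hε.1, lt_trans hε.2 hμ.2⟩
    have e1 : Wc c (gaussTailInv μ) - Wc c (gaussTailInv ε) = ∫ t in ε..μ, gT c t :=
      Wc_subst hεI hμ hε.2.le
    have hIocsplit : Set.Ioc (0:ℝ) μ = Set.Ioc 0 ε ∪ Set.Ioc ε μ :=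
      (Set.Ioc_union_Ioc_eq_Ioc hε.1.le hε.2.le).symm
    have e2 : ∫ t in Set.Ioc 0 μ, gT c t
        = (∫ t in Set.Ioc 0 ε, gT c t) + ∫ t in Set.Ioc ε μ, gT c t := by
      rw [hIocsplit]
      refine setIntegral_union ?_ measurableSet_Ioc ?_ ?_
      · exact Set.Ioc_disjoint_Ioc_of_le le_rfl
      · exact gT_integrableOn hε.1 hεI.2.le
      · exact (gT_integrableOn hμ.1 hμ.2.le).mono_set (Set.Ioc_subset_Ioc_left hε.1.le)
    have e3 : ∫ t in Set.Ioc ε μ, gT c t = ∫ t in ε..μ, gT c t :=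
      (intervalIntegral.integral_of_le hε.2.le).symm
    have e4 : d = Wc c (gaussTailInv ε) - ∫ t in Set.Ioc 0 ε, gT c t := by
      rw [hd, e2, e3]
      linarith
    have b1 : 0 ≤ Wc c (gaussTailInv ε) := Wc_nonneg _ _
    have b2 : Wc c (gaussTailInv ε) ≤ ε := by
      calc Wc c (gaussTailInv ε) ≤ gaussTail (gaussTailInv ε) := Wc_le _ _
        _ = ε := gaussTail_inv_eq hεI.1 hεI.2
    have b3 : |∫ t in Set.Ioc 0 ε, gT c t| ≤ ε := by
      have := norm_setIntegral_le_of_norm_le_const (C := 1)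
        (show volume (Set.Ioc (0:ℝ) ε) < ⊤ by simp [Real.volume_Ioc])
        (fun t _ => by
          rw [Real.norm_eq_abs, abs_of_nonneg (gT_nonneg c t)]; exact gT_le_one c t)
      rw [Real.norm_eq_abs] at this
      calc |∫ t in Set.Ioc 0 ε, gT c t| ≤ 1 * (volume (Set.Ioc (0:ℝ) ε)).toReal := this
        _ = ε := by simp [Real.volume_Ioc, hε.1.le]
    rw [e4, abs_sub_le_iff]
    constructor
    · have := abs_le.1 b3
      linarith
    · have := abs_le.1 b3
      linarith
  by_contra hne
  have hdpos : 0 < |d| := abs_pos.2 (sub_ne_zero.2 hne)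
  have hε : min (|d|/4) (μ/2) ∈ Set.Ioo (0:ℝ) μ := by
    constructor
    · exact lt_min (by linarith) (by linarith [hμ.1])
    · exact lt_of_le_of_lt (min_le_right _ _) (by linarith [hμ.1])
  have := key _ hε
  have h2 : 2 * min (|d|/4) (μ/2) ≤ 2 * (|d|/4) := by
    have := min_le_left (|d|/4) (μ/2)
    linarith
  linarith

lemma T_scale {c μ : ℝ} (hμ : 0 < μ) :
    ∫ t in Set.Ioc 0 μ, gT c t = μ * ∫ u in Set.Ioc (0:ℝ) 1, gT c (u * μ) := by
  have h1 : ∫ u in Set.Ioc (0:ℝ) 1, gT c (u * μ) = ∫ u in (0:ℝ)..1, gT c (u * μ) :=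
    (intervalIntegral.integral_of_le zero_le_one).symm
  have h2 : ∫ u in (0:ℝ)..1, gT c (u * μ) = μ⁻¹ • ∫ t in (0:ℝ)*μ..(1:ℝ)*μ, gT c t :=
    intervalIntegral.integral_comp_mul_right (gT c) hμ.ne'
  rw [h1, h2]
  simp only [zero_mul, one_mul, smul_eq_mul]
  rw [intervalIntegral.integral_of_le hμ.le]
  field_simp


lemma gTscaled_integrableOn {c μ : ℝ} (hμ : μ ∈ Set.Ioo (0:ℝ) (1/2)) :
    IntegrableOn (fun u => gT c (u * μ)) (Set.Ioc (0:ℝ) 1) := by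
  constructor
  · rw [restrict_Ioc_eq_Ioo]
    refine ContinuousOn.aestronglyMeasurable ?_ measurableSet_Ioo
    intro u hu
    have hmem : u * μ ∈ Set.Ioo (0:ℝ) (1/2) := by
      constructor
      · exact mul_pos hu.1 hμ.1
      · nlinarith [hu.2, hμ.1, hμ.2, hu.1]
    have h' : ContinuousAt (fun v : ℝ => v * μ) u := continuousAt_id.mul continuousAt_const
    exact (ContinuousAt.comp (x := u) (f := fun v : ℝ => v * μ) (g := gT c)
      (gT_continuousAt hmem) h').continuousWithinAt
  · refine MeasureTheory.HasFiniteIntegral.of_bounded (C := 1)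
      (Filter.Eventually.of_forall fun u => ?_)
    rw [Real.norm_eq_abs, abs_of_nonneg (gT_nonneg _ _)]
    exact gT_le_one _ _

/-- For every fixed `0 < τ < √2`, the function `μ ↦ Λ(τ, Φ_c⁻¹(μ))` is concave on
`0 < μ < 1/2`. -/
theorem lambda_concave (τ : ℝ) (hτ0 : 0 < τ) (hτ : τ < Real.sqrt 2) :
    ConcaveOn ℝ (Set.Ioo (0 : ℝ) (1 / 2)) (fun μ => lambdaFn τ (gaussTailInv μ)) := by
  have hsqrt2 : (Real.sqrt 2)^2 = 2 := Real.sq_sqrt (by norm_num)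
  have hτ2 : τ^2 < 2 := by nlinarith [Real.sqrt_nonneg 2]
  have harg : 0 < τ^2 - τ^4/4 := by nlinarith
  have hs0 : 0 < Real.sqrt (τ^2 - τ^4/4) := Real.sqrt_pos.2 harg
  have hs2 : (Real.sqrt (τ^2 - τ^4/4))^2 = τ^2 - τ^4/4 := Real.sq_sqrt harg.le
  have hrs : (1 - τ^2/2)^2 + (Real.sqrt (τ^2 - τ^4/4))^2 = 1 := by
    rw [hs2]; ring
  set c : ℝ := (1 - (1 - τ^2/2)) / Real.sqrt (τ^2 - τ^4/4) with hcdef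
  have hc0 : 0 ≤ c := div_nonneg (by nlinarith) hs0.le
  have hc1 : c ≤ 1 := by
    rw [hcdef, div_le_one hs0]
    nlinarith [hs0.le, hs2, sq_nonneg (Real.sqrt (τ^2 - τ^4/4) - τ^2/2)]
  have hgconc : ConcaveOn ℝ (Set.Ioo (0:ℝ) (1/2)) (gT c) := gFn_concave hc0 hc1
  -- the formula
  have hform : ∀ μ ∈ Set.Ioo (0:ℝ) (1/2),
      lambdaFn τ (gaussTailInv μ) = 2 * ∫ u in Set.Ioc (0:ℝ) 1, gT c (u * μ) := by
    intro μ hμ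
    have hμ0 : (0:ℝ) < μ := hμ.1
    have hquad := quadrant_toReal (ρ := 1 - τ^2/2) (s := Real.sqrt (τ^2 - τ^4/4))
      hs0 hrs (gaussTailInv μ)
    have hWcform : (∫ x in Set.Ici (gaussTailInv μ),
        φ₀ x * gaussTail ((1 - (1 - τ^2/2))/Real.sqrt (τ^2 - τ^4/4) * x)) = Wc c (gaussTailInv μ) := rfl
    rw [lambdaFn]
    have hset : {z : ℝ × ℝ | gaussTailInv μ ≤ z.1 ∧
        gaussTailInv μ ≤ (1 - τ ^ 2 / 2) * z.1 + Real.sqrt (τ ^ 2 - τ ^ 4 / 4) * z.2}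
        = {z : ℝ × ℝ | gaussTailInv μ ≤ z.1 ∧
        gaussTailInv μ ≤ (1 - τ ^ 2 / 2) * z.1 + Real.sqrt (τ ^ 2 - τ ^ 4 / 4) * z.2} := rfl
    rw [hquad, hWcform, gaussTail_inv_eq hμ.1 hμ.2, W_eq_T hμ, T_scale hμ0]
    field_simp
  -- concavity
  refine ⟨convex_Ioo _ _, ?_⟩
  intro x hx y hy a b ha hb hab
  have hxy : a • x + b • y ∈ Set.Ioo (0:ℝ) (1/2) := (convex_Ioo _ _) hx hy ha hb hab
  simp only [smul_eq_mul]
  rw [hform x hx, hform y hy, hform _ (by simpa using hxy)]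
  have hintx : IntegrableOn (fun u => gT c (u * x)) (Set.Ioc (0:ℝ) 1) := gTscaled_integrableOn hx
  have hinty : IntegrableOn (fun u => gT c (u * y)) (Set.Ioc (0:ℝ) 1) := gTscaled_integrableOn hy
  have hintxy : IntegrableOn (fun u => gT c (u * (a * x + b * y))) (Set.Ioc (0:ℝ) 1) := by
    have := gTscaled_integrableOn (c := c) (by simpa using hxy)
    simpa using this
  have hptwise : ∀ u ∈ Set.Ioc (0:ℝ) 1,
      a * gT c (u * x) + b * gT c (u * y) ≤ gT c (u * (a * x + b * y)) := by
    intro u hu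
    have h1 : u * x ∈ Set.Ioo (0:ℝ) (1/2) :=
      ⟨mul_pos hu.1 hx.1, by nlinarith [hu.2, hx.1, hx.2, hu.1]⟩
    have h2 : u * y ∈ Set.Ioo (0:ℝ) (1/2) :=
      ⟨mul_pos hu.1 hy.1, by nlinarith [hu.2, hy.1, hy.2, hu.1]⟩
    have := hgconc.2 h1 h2 ha hb hab
    simp only [smul_eq_mul] at this
    have heq : a * (u * x) + b * (u * y) = u * (a * x + b * y) := by ring
    rwa [heq] at this
  have hmono : ∫ u in Set.Ioc (0:ℝ) 1, (a * gT c (u * x) + b * gT c (u * y))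
      ≤ ∫ u in Set.Ioc (0:ℝ) 1, gT c (u * (a * x + b * y)) := by
    refine setIntegral_mono_on ((hintx.const_mul a).add (hinty.const_mul b)) hintxy
      measurableSet_Ioc hptwise
  have hlin : ∫ u in Set.Ioc (0:ℝ) 1, (a * gT c (u * x) + b * gT c (u * y))
      = a * (∫ u in Set.Ioc (0:ℝ) 1, gT c (u * x))
        + b * (∫ u in Set.Ioc (0:ℝ) 1, gT c (u * y)) := by
    rw [integral_add (hintx.const_mul a) (hinty.const_mul b)]
    simp only [← smul_eq_mul, integral_smul]
  rw [hlin] at hmono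
  linarith
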